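/- Let u : Ω ⊂ ℝⁿ → ℝᵐ be a smooth function, g_{ij} = δ_{ij} + ⟨D_i u, D_j u⟩ the induced metric on the graph, and g_{αβ} = δ_{αβ} + ⟨Du_α, Du_β⟩ the normal metric. Then the squared norm of the second fundamental form |A|²_g = g^{ik} g^{jl} g^{αβ} (D²_{ij} u_α)(D²_{kl} u_β) satisfies |A|²_g ≤ |D²u|² ≤ (1 + |Du|²)³ |A|²_g, where |D²u|² = Σ_{i,j,α} (D²_{ij} u_α)². -/

import Mathlib

open Matrix
open scoped Kronecker

section AuxLemmas

lemma psd_smul {ι : Type*} [Fintype ι] {A : Matrix ι ι ℝ} (hA : A.PosSemidef) {c : ℝ}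
    (hc : 0 ≤ c) : (c • A).PosSemidef := by
  refine Matrix.PosSemidef.of_dotProduct_mulVec_nonneg ?_ fun x => ?_
  · show (c • A)ᴴ = c • A
    rw [Matrix.conjTranspose_smul, hA.1.eq, star_trivial]
  · rw [Matrix.smul_mulVec, dotProduct_smul, smul_eq_mul]
    exact mul_nonneg hc (hA.dotProduct_mulVec_nonneg x)

lemma kron_psd {l p : Type*} [Fintype l] [Fintype p] [DecidableEq l] [DecidableEq p]
    {A : Matrix l l ℝ} {B : Matrix p p ℝ} (hA : A.PosSemidef) (hB : B.PosSemidef) :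
    (A ⊗ₖ B).PosSemidef := by
  exact hA.kronecker hB

lemma sub_kron {l p : Type*} [Fintype l] [Fintype p]
    (A A' : Matrix l l ℝ) (B : Matrix p p ℝ) :
    (A - A') ⊗ₖ B = A ⊗ₖ B - A' ⊗ₖ B := by
  ext ⟨i, a⟩ ⟨j, b⟩
  simp [Matrix.kroneckerMap_apply, sub_mul]

lemma kron_sub {l p : Type*} [Fintype l] [Fintype p]
    (A : Matrix l l ℝ) (B B' : Matrix p p ℝ) :
    A ⊗ₖ (B - B') = A ⊗ₖ B - A ⊗ₖ B' := by
  ext ⟨i, a⟩ ⟨j, b⟩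
  simp [Matrix.kroneckerMap_apply, mul_sub]

lemma posdef_one' {l : Type*} [Fintype l] [DecidableEq l] : (1 : Matrix l l ℝ).PosDef :=
  Matrix.PosDef.of_dotProduct_mulVec_pos Matrix.isHermitian_one fun x hx => by
    simpa using Matrix.dotProduct_star_self_pos_iff.mpr hx

lemma gram_le {p q : ℕ} (D : Matrix (Fin p) (Fin q) ℝ) :
    ((∑ i, ∑ a, D i a ^ 2) • (1 : Matrix (Fin p) (Fin p) ℝ) - D * Dᵀ).PosSemidef := by
  have hDH : Dᴴ = Dᵀ := by ext i j; simp [Matrix.conjTranspose_apply]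
  refine Matrix.PosSemidef.of_dotProduct_mulVec_nonneg ?_ ?_
  · show _ᴴ = _
    rw [Matrix.conjTranspose_sub, Matrix.conjTranspose_smul, star_trivial,
      Matrix.conjTranspose_one]
    congr 1
    rw [Matrix.conjTranspose_mul, ← hDH, Matrix.conjTranspose_conjTranspose, hDH]
  · intro x
    have hx : star x = x := by ext i; simp
    rw [hx, Matrix.sub_mulVec, dotProduct_sub, Matrix.smul_mulVec, Matrix.one_mulVec,
      dotProduct_smul, smul_eq_mul]
    have h1 : x ⬝ᵥ ((D * Dᵀ) *ᵥ x) = (Dᵀ *ᵥ x) ⬝ᵥ (Dᵀ *ᵥ x) := by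
      rw [← Matrix.mulVec_mulVec, Matrix.dotProduct_mulVec, ← Matrix.mulVec_transpose]
    have h2 : (Dᵀ *ᵥ x) ⬝ᵥ (Dᵀ *ᵥ x) ≤ (∑ i, ∑ a, D i a ^ 2) * (x ⬝ᵥ x) := by
      have hcs : ∀ a, (Dᵀ *ᵥ x) a * (Dᵀ *ᵥ x) a ≤ (∑ i, D i a ^ 2) * (∑ i, x i ^ 2) := by
        intro a
        have : (Dᵀ *ᵥ x) a = ∑ i, D i a * x i := by
          simp [Matrix.mulVec, dotProduct, Matrix.transpose_apply]
        rw [this, ← pow_two]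
        exact Finset.sum_mul_sq_le_sq_mul_sq Finset.univ _ _
      calc (Dᵀ *ᵥ x) ⬝ᵥ (Dᵀ *ᵥ x) = ∑ a, (Dᵀ *ᵥ x) a * (Dᵀ *ᵥ x) a := rfl
        _ ≤ ∑ a, (∑ i, D i a ^ 2) * (∑ i, x i ^ 2) := Finset.sum_le_sum fun a _ => hcs a
        _ = (∑ a, ∑ i, D i a ^ 2) * (∑ i, x i ^ 2) := by rw [← Finset.sum_mul]
        _ = (∑ i, ∑ a, D i a ^ 2) * (x ⬝ᵥ x) := by
            rw [Finset.sum_comm]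
            congr 1
            simp [dotProduct, pow_two]
    linarith [h1, h2]

lemma inv_bounds {p q : ℕ} (D : Matrix (Fin p) (Fin q) ℝ)
    (G : Matrix (Fin p) (Fin p) ℝ) (hG : G = 1 + D * Dᵀ)
    {lam : ℝ} (hlam : lam = ∑ i, ∑ a, D i a ^ 2) :
    G⁻¹.PosSemidef ∧ (1 - G⁻¹).PosSemidef ∧ (G⁻¹ - (1 + lam)⁻¹ • 1).PosSemidef := by
  have hDH : Dᴴ = Dᵀ := by ext i j; simp [Matrix.conjTranspose_apply]
  set K := D * Dᵀ with hK
  have hKpsd : K.PosSemidef := by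
    have := Matrix.posSemidef_self_mul_conjTranspose D
    rwa [hDH] at this
  have hGpd : G.PosDef := by rw [hG]; exact Matrix.PosDef.add_posSemidef posdef_one' hKpsd
  have hdet : IsUnit G.det := (Matrix.isUnit_iff_isUnit_det _).1 hGpd.isUnit
  have h1 : G * G⁻¹ = 1 := Matrix.mul_nonsing_inv G hdet
  have h2 : G⁻¹ * G = 1 := Matrix.nonsing_inv_mul G hdet
  have hApsd : G⁻¹.PosSemidef := hGpd.posSemidef.inv
  have hAH : G⁻¹ᴴ = G⁻¹ := hApsd.1
  have hKG : G⁻¹ * K = 1 - G⁻¹ := by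
    have : G⁻¹ * (1 + K) = 1 := by rw [← hG]; exact h2
    rw [mul_add, mul_one] at this
    linear_combination (norm := abel) this
  have e1 : 1 - G⁻¹ = G⁻¹ * (K + K * K) * G⁻¹ᴴ := by
    rw [hAH]
    have : K + K * K = K * G := by rw [hG, mul_add, mul_one]
    rw [this, ← mul_assoc, mul_assoc (G⁻¹ * K) G G⁻¹, h1, mul_one, hKG]
  have hKKpsd : (K * K).PosSemidef := by
    have := Matrix.posSemidef_conjTranspose_mul_self K
    rwa [hKpsd.1.eq] at this
  have psd1 : (1 - G⁻¹).PosSemidef := by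
    rw [e1]
    exact (hKpsd.add hKKpsd).mul_mul_conjTranspose_same G⁻¹
  have hlam0 : 0 ≤ lam := by
    rw [hlam]; positivity
  have hpos : (0:ℝ) < 1 + lam := by linarith
  set c : ℝ := (1 + lam)⁻¹ with hc
  have hc0 : 0 ≤ c := by positivity
  have hb1 : (lam • 1 - K).PosSemidef := by
    have := gram_le D; rwa [← hlam] at this
  have hb2 : (lam • (1 : Matrix (Fin q) (Fin q) ℝ) - Dᵀ * D).PosSemidef := by
    have := gram_le Dᵀ
    rw [Matrix.transpose_transpose] at this
    have hsum : (∑ a, ∑ i, Dᵀ a i ^ 2) = lam := by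
      rw [hlam, Finset.sum_comm]; simp [Matrix.transpose_apply]
    rwa [hsum] at this
  have inner_eq : (lam • 1 - K) + D * (lam • (1 : Matrix (Fin q) (Fin q) ℝ) - Dᵀ * D) * Dᵀ
      = (lam • 1 - K) * G := by
    rw [hG, hK]
    simp only [Matrix.mul_add, Matrix.add_mul, Matrix.mul_smul, Matrix.smul_mul,
      Matrix.mul_sub, Matrix.sub_mul, mul_one, one_mul, Matrix.one_mul, Matrix.mul_one, Matrix.mul_assoc]
  have t1 : G⁻¹ * ((lam • 1 - K) * G) * G⁻¹ = G⁻¹ * (lam • 1 - K) := by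
    rw [← Matrix.mul_assoc, Matrix.mul_assoc (G⁻¹ * (lam • 1 - K)) G G⁻¹, h1, Matrix.mul_one]
  have t2 : G⁻¹ * (lam • 1 - K) = (1 + lam) • G⁻¹ - 1 := by
    rw [Matrix.mul_sub, Matrix.mul_smul, Matrix.mul_one, hKG, add_smul, one_smul]
    abel
  have e2 : G⁻¹ - c • 1 =
      c • (G⁻¹ * ((lam • 1 - K) + D * (lam • (1 : Matrix (Fin q) (Fin q) ℝ) - Dᵀ * D) * Dᵀ)
        * G⁻¹ᴴ) := by
    rw [hAH, inner_eq, t1, t2, smul_sub, smul_smul, hc, inv_mul_cancel₀ hpos.ne', one_smul]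
  have hDpart : (D * (lam • (1 : Matrix (Fin q) (Fin q) ℝ) - Dᵀ * D) * Dᵀ).PosSemidef := by
    have := hb2.mul_mul_conjTranspose_same D
    rwa [hDH] at this
  have psd2 : (G⁻¹ - c • 1).PosSemidef := by
    rw [e2]
    exact psd_smul ((hb1.add hDpart).mul_mul_conjTranspose_same G⁻¹) hc0
  exact ⟨hApsd, psd1, psd2⟩

lemma interchange {n m : ℕ} (F : Fin n → Fin n → Fin m → Fin n → Fin n → Fin m → ℝ) :
    (∑ i, ∑ j, ∑ a, ∑ k, ∑ l, ∑ b, F i j a k l b)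
      = ∑ i, ∑ k, ∑ j, ∑ l, ∑ a, ∑ b, F i j a k l b := by
  refine Finset.sum_congr rfl fun i _ => ?_
  calc (∑ j, ∑ a, ∑ k, ∑ l, ∑ b, F i j a k l b)
      = ∑ j, ∑ k, ∑ a, ∑ l, ∑ b, F i j a k l b :=
        Finset.sum_congr rfl fun j _ => Finset.sum_comm
    _ = ∑ k, ∑ j, ∑ a, ∑ l, ∑ b, F i j a k l b := Finset.sum_comm
    _ = ∑ k, ∑ j, ∑ l, ∑ a, ∑ b, F i j a k l b :=
        Finset.sum_congr rfl fun k _ => Finset.sum_congr rfl fun j _ => Finset.sum_comm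

lemma quad_expand {n m : ℕ} (A : Matrix (Fin n) (Fin n) ℝ) (B : Matrix (Fin m) (Fin m) ℝ)
    (T : Fin n → Fin n → Fin m → ℝ) :
    ((fun p : Fin n × Fin n × Fin m => T p.1 p.2.1 p.2.2) ⬝ᵥ
      ((A ⊗ₖ (A ⊗ₖ B)) *ᵥ fun p : Fin n × Fin n × Fin m => T p.1 p.2.1 p.2.2))
    = ∑ i, ∑ k, ∑ j, ∑ l, ∑ a, ∑ b, A i k * A j l * B a b * T i j a * T k l b := by
  calc ((fun p : Fin n × Fin n × Fin m => T p.1 p.2.1 p.2.2) ⬝ᵥ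
      ((A ⊗ₖ (A ⊗ₖ B)) *ᵥ fun p : Fin n × Fin n × Fin m => T p.1 p.2.1 p.2.2))
      = ∑ i, ∑ j, ∑ a, ∑ k, ∑ l, ∑ b, A i k * A j l * B a b * T i j a * T k l b := by
        simp only [dotProduct, Matrix.mulVec, Matrix.kroneckerMap_apply,
          Fintype.sum_prod_type, Finset.mul_sum]
        refine Finset.sum_congr rfl fun i _ => Finset.sum_congr rfl fun j _ =>
          Finset.sum_congr rfl fun a _ => Finset.sum_congr rfl fun k _ =>
          Finset.sum_congr rfl fun l _ => Finset.sum_congr rfl fun b _ => by ring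
    _ = ∑ i, ∑ k, ∑ j, ∑ l, ∑ a, ∑ b, A i k * A j l * B a b * T i j a * T k l b :=
        interchange (fun i j a k l b => A i k * A j l * B a b * T i j a * T k l b)

lemma norm_expand {n m : ℕ} (T : Fin n → Fin n → Fin m → ℝ) :
    ((fun p : Fin n × Fin n × Fin m => T p.1 p.2.1 p.2.2) ⬝ᵥ
      fun p : Fin n × Fin n × Fin m => T p.1 p.2.1 p.2.2)
    = ∑ i, ∑ j, ∑ a, T i j a ^ 2 := by
  simp only [dotProduct, Fintype.sum_prod_type, ← pow_two]

end AuxLemmas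

/-- `|A|²_g ≤ |D²u|² ≤ (1+|Du|²)³ |A|²_g` for graphs. -/
theorem stmt_1 {n m : ℕ} (Ω : Set (Fin n → ℝ)) (hΩ : IsOpen Ω)
    (u : (Fin n → ℝ) → (Fin m → ℝ)) (hu : ContDiffOn ℝ 2 u Ω)
    (x : Fin n → ℝ) (hx : x ∈ Ω)
    (Du : Fin n → Fin m → ℝ)
    (hDu : ∀ i a, Du i a = fderiv ℝ u x (Pi.single i 1) a)
    (D2u : Fin n → Fin n → Fin m → ℝ)
    (hD2u : ∀ i j a, D2u i j a =
      fderiv ℝ (fun y => fderiv ℝ u y (Pi.single i 1) a) x (Pi.single j 1))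
    (g : Matrix (Fin n) (Fin n) ℝ)
    (hg : ∀ i j, g i j = (if i = j then (1:ℝ) else 0) + ∑ a, Du i a * Du j a)
    (gN : Matrix (Fin m) (Fin m) ℝ)
    (hgN : ∀ a b, gN a b = (if a = b then (1:ℝ) else 0) + ∑ i, Du i a * Du i b) :
    (∑ i, ∑ k, ∑ j, ∑ l, ∑ a, ∑ b,
        g⁻¹ i k * g⁻¹ j l * gN⁻¹ a b * D2u i j a * D2u k l b)
      ≤ ∑ i, ∑ j, ∑ a, D2u i j a ^ 2 ∧
    (∑ i, ∑ j, ∑ a, D2u i j a ^ 2)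
      ≤ (1 + ∑ i, ∑ a, Du i a ^ 2) ^ 3 *
        (∑ i, ∑ k, ∑ j, ∑ l, ∑ a, ∑ b,
          g⁻¹ i k * g⁻¹ j l * gN⁻¹ a b * D2u i j a * D2u k l b) := by
  set lam : ℝ := ∑ i, ∑ a, Du i a ^ 2 with hlam
  set Dm : Matrix (Fin n) (Fin m) ℝ := Matrix.of Du with hDm
  have hgD : g = 1 + Dm * Dmᵀ := by
    ext i j
    rw [Matrix.add_apply, hg i j, Matrix.one_apply]
    simp [Matrix.mul_apply, hDm]
  have hgND : gN = 1 + Dmᵀ * Dmᵀᵀ := by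
    ext a b
    rw [Matrix.add_apply, hgN a b, Matrix.one_apply]
    simp [Matrix.mul_apply, hDm]
  obtain ⟨hA, hA1, hAc⟩ := inv_bounds Dm g hgD (lam := lam) (by rw [hlam]; rfl)
  obtain ⟨hB, hB1, hBc⟩ := inv_bounds Dmᵀ gN hgND (lam := lam)
    (by rw [hlam, Finset.sum_comm]; rfl)
  have hlam0 : (0:ℝ) ≤ lam := by rw [hlam]; positivity
  have hpos : (0:ℝ) < 1 + lam := by linarith
  set c : ℝ := (1 + lam)⁻¹ with hc
  have hc0 : (0:ℝ) ≤ c := by positivity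
  set A : Matrix (Fin n) (Fin n) ℝ := g⁻¹ with hAdef
  set B : Matrix (Fin m) (Fin m) ℝ := gN⁻¹ with hBdef
  set M : Matrix (Fin n × Fin n × Fin m) (Fin n × Fin n × Fin m) ℝ := A ⊗ₖ (A ⊗ₖ B) with hM
  set t : Fin n × Fin n × Fin m → ℝ := fun p => D2u p.1 p.2.1 p.2.2 with ht
  have id1 : (1 : Matrix (Fin n × Fin n × Fin m) (Fin n × Fin n × Fin m) ℝ) - M
      = (1 - A) ⊗ₖ (A ⊗ₖ B) + 1 ⊗ₖ ((1 - A) ⊗ₖ B) + 1 ⊗ₖ (1 ⊗ₖ (1 - B)) := by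
    simp only [hM, sub_kron, kron_sub, Matrix.one_kronecker_one]
    abel
  have id2 : M - (c ^ 3) • 1
      = (A - c • 1) ⊗ₖ (A ⊗ₖ B) + c • (1 ⊗ₖ ((A - c • 1) ⊗ₖ B))
        + c ^ 2 • (1 ⊗ₖ (1 ⊗ₖ (B - c • 1))) := by
    simp only [hM, sub_kron, kron_sub, Matrix.smul_kronecker, Matrix.kronecker_smul,
      Matrix.one_kronecker_one, smul_sub, smul_smul]
    module
  have psd_upper : ((1 : Matrix (Fin n × Fin n × Fin m) (Fin n × Fin n × Fin m) ℝ) - M).PosSemidef := by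
    rw [id1]
    exact ((kron_psd hA1 (kron_psd hA hB)).add
      (kron_psd Matrix.PosSemidef.one (kron_psd hA1 hB))).add
      (kron_psd Matrix.PosSemidef.one (kron_psd Matrix.PosSemidef.one hB1))
  have psd_lower : (M - (c ^ 3) • 1).PosSemidef := by
    rw [id2]
    exact ((kron_psd hAc (kron_psd hA hB)).add
      (psd_smul (kron_psd Matrix.PosSemidef.one (kron_psd hAc hB)) hc0)).add
      (psd_smul (kron_psd Matrix.PosSemidef.one (kron_psd Matrix.PosSemidef.one hBc))
        (by positivity))
  have hstar : star t = t := by ext p; simp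
  have hQ : t ⬝ᵥ (M *ᵥ t) = ∑ i, ∑ k, ∑ j, ∑ l, ∑ a, ∑ b,
      g⁻¹ i k * g⁻¹ j l * gN⁻¹ a b * D2u i j a * D2u k l b := quad_expand A B D2u
  have hN : t ⬝ᵥ t = ∑ i, ∑ j, ∑ a, D2u i j a ^ 2 := norm_expand D2u
  constructor
  · have h := psd_upper.dotProduct_mulVec_nonneg t
    rw [hstar, Matrix.sub_mulVec, dotProduct_sub, Matrix.one_mulVec, hQ, hN] at h
    linarith
  · have h := psd_lower.dotProduct_mulVec_nonneg t
    rw [hstar, Matrix.sub_mulVec, dotProduct_sub, Matrix.smul_mulVec, Matrix.one_mulVec,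
      dotProduct_smul, smul_eq_mul, hQ, hN] at h
    have hcc : (1 + lam) ^ 3 * c ^ 3 = 1 := by
      rw [hc, ← mul_pow, mul_inv_cancel₀ hpos.ne', one_pow]
    set Q := ∑ i, ∑ k, ∑ j, ∑ l, ∑ a, ∑ b,
      g⁻¹ i k * g⁻¹ j l * gN⁻¹ a b * D2u i j a * D2u k l b
    set S := ∑ i, ∑ j, ∑ a, D2u i j a ^ 2
    calc S = (1 + lam) ^ 3 * (c ^ 3 * S) := by rw [← mul_assoc, hcc, one_mul]
      _ ≤ (1 + lam) ^ 3 * Q := by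
          apply mul_le_mul_of_nonneg_left (by linarith) (by positivity)
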